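/- If ε = 1 (Markeev's integrable case of the gyroscopic ball rolling over a plane), then along any solution of the gyroscopic Chaplygin ball system the function F₄(t) = ⟨G(t) + κ, γ(t)⟩ is constant in t. -/

import Mathlib

open Matrix

/-- If `ε = 1` (Markeev's integrable case of the gyroscopic ball rolling over a plane),
then along any solution of the gyroscopic Chaplygin ball system the function
`F₄ = ⟨G + κ, γ⟩` is constant. -/
theorem gyroscopic_chaplygin_ball_markeev_integral
    (I₁ I₂ I₃ D ε : ℝ) (hI₁ : 0 < I₁) (hI₂ : 0 < I₂) (hI₃ : 0 < I₃) (hD : 0 < D)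
    (hε : ε = 1)
    (κ : Fin 3 → ℝ)
    (ω γ : ℝ → Fin 3 → ℝ) (hω : Differentiable ℝ ω) (hγ : Differentiable ℝ γ)
    (G : ℝ → Fin 3 → ℝ)
    (hG : ∀ t, G t =
      (Matrix.diagonal ![I₁, I₂, I₃] + D • (1 : Matrix (Fin 3) (Fin 3) ℝ)) *ᵥ ω t
        - (D * (ω t ⬝ᵥ γ t)) • γ t)
    (heqG : ∀ t, HasDerivAt G ((G t + κ) ⨯₃ ω t) t)
    (heqγ : ∀ t, HasDerivAt γ (ε • (γ t ⨯₃ ω t)) t) :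
    ∀ t₁ t₂ : ℝ, (G t₁ + κ) ⬝ᵥ γ t₁ = (G t₂ + κ) ⬝ᵥ γ t₂ := by
  subst hε
  have key : ∀ t, HasDerivAt (fun t => (G t + κ) ⬝ᵥ γ t) 0 t := by
    intro t
    have hGi : ∀ i, HasDerivAt (fun t => G t i) (((G t + κ) ⨯₃ ω t) i) t :=
      hasDerivAt_pi.1 (heqG t)
    have hγi : ∀ i, HasDerivAt (fun t => γ t i) (((1:ℝ) • (γ t ⨯₃ ω t)) i) t :=
      hasDerivAt_pi.1 (heqγ t)
    have h : HasDerivAt (fun t => (G t + κ) ⬝ᵥ γ t)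
        (∑ i, (((G t + κ) ⨯₃ ω t) i * γ t i
          + (G t i + κ i) * ((1:ℝ) • (γ t ⨯₃ ω t)) i)) t := by
      simp only [dotProduct]
      apply HasDerivAt.fun_sum
      intro i _
      exact (((hGi i).add_const (κ i)).mul (hγi i))
    convert h using 1
    simp only [crossProduct, one_smul, LinearMap.mk₂_apply, Pi.add_apply,
      Fin.sum_univ_three]
    simp [Matrix.cons_val_zero, Matrix.cons_val_one, Matrix.head_cons]
    ring
  have hconst : ∀ t₁ t₂ : ℝ, (fun t => (G t + κ) ⬝ᵥ γ t) t₁ = (fun t => (G t + κ) ⬝ᵥ γ t) t₂ := by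
    have := is_const_of_deriv_eq_zero (f := fun t => (G t + κ) ⬝ᵥ γ t)
      (fun t => (key t).differentiableAt) (fun t => (key t).deriv)
    intro t₁ t₂; exact this t₁ t₂
  exact hconst
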